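/- Under the self-censoring assumption R_i ⫫ Y_{-i} | (X, Y_i, R_{-i}) and positivity, the itemwise odds function O_i satisfies the integral equation E{O_i(X, Y_i) | X = x, Y_{-i} = y_{-i}, R = 1} = f(x, y_{-i}, R_i = 0, R_{-i} = 1) / f(x, y_{-i}, R = 1), where the expectation on the left is over Y_i given (X = x, Y_{-i} = y_{-i}, R = 1). -/

import Mathlib

open Finset
open scoped Classical

noncomputable def pr {Ω : Type*} [Fintype Ω] (μ : Ω → ℝ) (A : Ω → Prop) : ℝ :=
  ∑ ω, if A ω then μ ω else 0

noncomputable def cpr {Ω : Type*} [Fintype Ω] (μ : Ω → ℝ) (A B : Ω → Prop) : ℝ :=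
  pr μ (fun ω => A ω ∧ B ω) / pr μ B

/-- The itemwise odds function `O_i(x, y_i)`. -/
noncomputable def oddsFn {Ω 𝒳 𝒴 : Type*} [Fintype Ω] {p : ℕ} (μ : Ω → ℝ)
    (X : Ω → 𝒳) (Y : Ω → Fin p → 𝒴) (R : Ω → Fin p → Bool)
    (i : Fin p) (x : 𝒳) (yi : 𝒴) : ℝ :=
  cpr μ (fun ω => R ω i = false)
      (fun ω => X ω = x ∧ Y ω i = yi ∧ ∀ j, j ≠ i → R ω j = true) /
    cpr μ (fun ω => R ω i = true)
      (fun ω => X ω = x ∧ Y ω i = yi ∧ ∀ j, j ≠ i → R ω j = true)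

section aux
variable {Ω : Type*} [Fintype Ω] (μ : Ω → ℝ)

lemma pr_congr {A B : Ω → Prop} (h : ∀ ω, A ω ↔ B ω) : pr μ A = pr μ B := by
  unfold pr
  exact Finset.sum_congr rfl fun ω _ => by simp [h ω]

lemma pr_nonneg (hμ0 : ∀ ω, 0 ≤ μ ω) (A : Ω → Prop) : 0 ≤ pr μ A := by
  unfold pr
  exact Finset.sum_nonneg fun ω _ => by split <;> simp [hμ0 ω]

lemma pr_mono (hμ0 : ∀ ω, 0 ≤ μ ω) {A B : Ω → Prop} (h : ∀ ω, A ω → B ω) :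
    pr μ A ≤ pr μ B := by
  unfold pr
  refine Finset.sum_le_sum fun ω _ => ?_
  by_cases hA : A ω
  · simp [hA, h ω hA]
  · simp only [hA, if_false]
    split <;> simp [hμ0 ω]

lemma le_pr_of_mem (hμ0 : ∀ ω, 0 ≤ μ ω) {A : Ω → Prop} {ω0 : Ω} (h : A ω0) :
    μ ω0 ≤ pr μ A := by
  unfold pr
  have := Finset.single_le_sum (f := fun ω => if A ω then μ ω else 0)
    (fun ω _ => by split <;> simp [hμ0 ω]) (Finset.mem_univ ω0)
  simpa [h] using this

lemma pr_exists_pos (hμ0 : ∀ ω, 0 ≤ μ ω) {A : Ω → Prop} (h : 0 < pr μ A) :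
    ∃ ω, A ω ∧ 0 < μ ω := by
  by_contra hc
  push_neg at hc
  have : pr μ A ≤ 0 := by
    unfold pr
    refine Finset.sum_nonpos fun ω _ => ?_
    by_cases hA : A ω
    · simpa [hA] using hc ω hA
    · simp [hA]
  linarith

lemma pr_partition {𝒴 : Type*} [Fintype 𝒴] (f : Ω → 𝒴) (A : Ω → Prop) :
    ∑ v : 𝒴, pr μ (fun ω => A ω ∧ f ω = v) = pr μ A := by
  unfold pr
  rw [Finset.sum_comm]
  refine Finset.sum_congr rfl fun ω _ => ?_
  by_cases hA : A ω <;> simp [hA]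

end aux

lemma ratio_lemma {P N0 N1 Q M0 M1 D : ℝ} (hP : 0 < P) (hN1 : 0 < N1) (hD : 0 < D)
    (e0 : M0 / P = N0 / P * (Q / P)) (e1 : M1 / P = N1 / P * (Q / P)) :
    N0 / P / (N1 / P) * (M1 / D) = M0 / D := by
  have hPne : P ≠ 0 := ne_of_gt hP
  have hN1ne : N1 ≠ 0 := ne_of_gt hN1
  have hDne : D ≠ 0 := ne_of_gt hD
  have E0 : M0 * P = N0 * Q := by field_simp at e0; exact mul_right_cancel₀ hPne (by linear_combination P * e0)
  have E1 : M1 * P = N1 * Q := by field_simp at e1; exact mul_right_cancel₀ hPne (by linear_combination P * e1)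
  have key : N0 * M1 = N1 * M0 :=
    mul_right_cancel₀ hPne (by linear_combination N0 * E1 - N1 * E0)
  have h1 : N0 / P / (N1 / P) = N0 / N1 := by
    field_simp
  rw [h1, div_mul_div_comm, div_eq_div_iff (by positivity) hDne]
  linear_combination D * key


theorem stmt4 {Ω 𝒳 𝒴 : Type*} [Fintype Ω] [Fintype 𝒴] {p : ℕ}
    (μ : Ω → ℝ) (hμ0 : ∀ ω, 0 ≤ μ ω) (hμ1 : ∑ ω, μ ω = 1)
    (X : Ω → 𝒳) (Y : Ω → Fin p → 𝒴) (R : Ω → Fin p → Bool)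
    (selfcensor : ∀ (i : Fin p) (a : Bool) (x : 𝒳) (yi : 𝒴) (yv : Fin p → 𝒴)
        (rv : Fin p → Bool),
      pr μ (fun ω => X ω = x ∧ Y ω i = yi ∧ ∀ j, j ≠ i → R ω j = rv j) > 0 →
      cpr μ (fun ω => R ω i = a ∧ ∀ j, j ≠ i → Y ω j = yv j)
          (fun ω => X ω = x ∧ Y ω i = yi ∧ ∀ j, j ≠ i → R ω j = rv j)
        = cpr μ (fun ω => R ω i = a)
            (fun ω => X ω = x ∧ Y ω i = yi ∧ ∀ j, j ≠ i → R ω j = rv j)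
          * cpr μ (fun ω => ∀ j, j ≠ i → Y ω j = yv j)
            (fun ω => X ω = x ∧ Y ω i = yi ∧ ∀ j, j ≠ i → R ω j = rv j))
    (hpos : ∀ (r' : Fin p → Bool) (x : 𝒳) (y : Fin p → 𝒴),
      pr μ (fun ω => X ω = x ∧ ∀ j, Y ω j = y j) > 0 →
      cpr μ (fun ω => ∀ j, R ω j = r' j) (fun ω => X ω = x ∧ ∀ j, Y ω j = y j) > 0)
    (i : Fin p) (x : 𝒳) (y : Fin p → 𝒴)
    (hcond : pr μ (fun ω => X ω = x ∧ (∀ j, j ≠ i → Y ω j = y j) ∧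
      ∀ j, R ω j = true) > 0) :
    ∑ yi : 𝒴, oddsFn μ X Y R i x yi *
        cpr μ (fun ω => Y ω i = yi)
          (fun ω => X ω = x ∧ (∀ j, j ≠ i → Y ω j = y j) ∧ ∀ j, R ω j = true)
      = pr μ (fun ω => X ω = x ∧ (∀ j, j ≠ i → Y ω j = y j) ∧
            R ω i = false ∧ ∀ j, j ≠ i → R ω j = true) /
        pr μ (fun ω => X ω = x ∧ (∀ j, j ≠ i → Y ω j = y j) ∧ ∀ j, R ω j = true) := by
  have key : ∀ yi : 𝒴,
      oddsFn μ X Y R i x yi *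
        cpr μ (fun ω => Y ω i = yi)
          (fun ω => X ω = x ∧ (∀ j, j ≠ i → Y ω j = y j) ∧ ∀ j, R ω j = true)
      = pr μ (fun ω => (X ω = x ∧ (∀ j, j ≠ i → Y ω j = y j) ∧
            R ω i = false ∧ ∀ j, j ≠ i → R ω j = true) ∧ Y ω i = yi) /
        pr μ (fun ω => X ω = x ∧ (∀ j, j ≠ i → Y ω j = y j) ∧ ∀ j, R ω j = true) := by
    intro yi
    by_cases hP : 0 < pr μ (fun ω => X ω = x ∧ Y ω i = yi ∧ ∀ j, j ≠ i → R ω j = true)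
    · -- positive case
      -- N1 > 0
      obtain ⟨ω0, hω0A, hω0μ⟩ := pr_exists_pos μ hμ0 hP
      have hy0 : 0 < pr μ (fun ω => X ω = x ∧ ∀ j, Y ω j = Y ω0 j) :=
        lt_of_lt_of_le hω0μ (le_pr_of_mem μ hμ0 ⟨hω0A.1, fun j => rfl⟩)
      have hc := hpos (fun _ => true) x (Y ω0) hy0
      rw [cpr] at hc
      have hnum : 0 < pr μ (fun ω => (∀ j, R ω j = true) ∧
          X ω = x ∧ ∀ j, Y ω j = Y ω0 j) := by
        rcases div_pos_iff.mp hc with h | h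
        · exact h.1
        · linarith [h.2]
      have hN1 : 0 < pr μ (fun ω => R ω i = true ∧
          (X ω = x ∧ Y ω i = yi ∧ ∀ j, j ≠ i → R ω j = true)) := by
        refine lt_of_lt_of_le hnum (pr_mono μ hμ0 ?_)
        rintro ω ⟨hR, hX, hY⟩
        exact ⟨hR i, hX, (hY i).trans hω0A.2.1, fun j _ => hR j⟩
      have sc0 := selfcensor i false x yi y (fun _ => true) hP
      have sc1 := selfcensor i true x yi y (fun _ => true) hP
      have hM1 : pr μ (fun ω => Y ω i = yi ∧ (X ω = x ∧ (∀ j, j ≠ i → Y ω j = y j) ∧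
            ∀ j, R ω j = true))
          = pr μ (fun ω => (R ω i = true ∧ ∀ j, j ≠ i → Y ω j = y j) ∧
            (X ω = x ∧ Y ω i = yi ∧ ∀ j, j ≠ i → R ω j = true)) := by
        refine pr_congr μ fun ω => ?_
        constructor
        · rintro ⟨h1, h2, h3, h4⟩
          exact ⟨⟨h4 i, h3⟩, h2, h1, fun j _ => h4 j⟩
        · rintro ⟨⟨ha, hb⟩, hc', hd, he⟩
          refine ⟨hd, hc', hb, fun j => ?_⟩
          by_cases hj : j = i
          · subst hj; exact ha
          · exact he j hj
      have hM0 : pr μ (fun ω => (X ω = x ∧ (∀ j, j ≠ i → Y ω j = y j) ∧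
            R ω i = false ∧ ∀ j, j ≠ i → R ω j = true) ∧ Y ω i = yi)
          = pr μ (fun ω => (R ω i = false ∧ ∀ j, j ≠ i → Y ω j = y j) ∧
            (X ω = x ∧ Y ω i = yi ∧ ∀ j, j ≠ i → R ω j = true)) := by
        refine pr_congr μ fun ω => ?_
        tauto
      unfold oddsFn cpr
      rw [hM1, hM0]
      exact ratio_lemma hP hN1 hcond sc0 sc1
    · -- degenerate case
      have hP0 : pr μ (fun ω => X ω = x ∧ Y ω i = yi ∧ ∀ j, j ≠ i → R ω j = true) = 0 :=
        le_antisymm (le_of_not_gt hP) (pr_nonneg μ hμ0 _)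
      have hE : pr μ (fun ω => (X ω = x ∧ (∀ j, j ≠ i → Y ω j = y j) ∧
            R ω i = false ∧ ∀ j, j ≠ i → R ω j = true) ∧ Y ω i = yi) = 0 := by
        refine le_antisymm (le_trans (pr_mono μ hμ0 ?_) hP0.le) (pr_nonneg μ hμ0 _)
        rintro ω ⟨⟨h1, h2, h3, h4⟩, h5⟩
        exact ⟨h1, h5, h4⟩
      unfold oddsFn cpr
      rw [hP0, hE]
      simp
  calc ∑ yi : 𝒴, oddsFn μ X Y R i x yi *
        cpr μ (fun ω => Y ω i = yi)
          (fun ω => X ω = x ∧ (∀ j, j ≠ i → Y ω j = y j) ∧ ∀ j, R ω j = true)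
      = ∑ yi : 𝒴, pr μ (fun ω => (X ω = x ∧ (∀ j, j ≠ i → Y ω j = y j) ∧
            R ω i = false ∧ ∀ j, j ≠ i → R ω j = true) ∧ Y ω i = yi) /
          pr μ (fun ω => X ω = x ∧ (∀ j, j ≠ i → Y ω j = y j) ∧ ∀ j, R ω j = true) :=
        Finset.sum_congr rfl fun yi _ => key yi
    _ = (∑ yi : 𝒴, pr μ (fun ω => (X ω = x ∧ (∀ j, j ≠ i → Y ω j = y j) ∧
            R ω i = false ∧ ∀ j, j ≠ i → R ω j = true) ∧ Y ω i = yi)) /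
          pr μ (fun ω => X ω = x ∧ (∀ j, j ≠ i → Y ω j = y j) ∧ ∀ j, R ω j = true) :=
        (Finset.sum_div _ _ _).symm
    _ = _ := by rw [pr_partition μ (fun ω => Y ω i) _]
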